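/- There exists a group homomorphism from the braid group B(A) to the group of F-algebra automorphisms of K_t(A) that sends the generator σ_i to T_i for every i ∈ I. In other words, the braid group B(A) acts on K_t(A) by F-algebra automorphisms via the explicit formulas: σ_i(y(j,m)) = y(j, m + δ_{ij}) if a(i,j) ≠ −1 and σ_i(y(j,m)) = (t^{1/2} y(j,m) y(i,m) − t^{−1/2} y(i,m) y(j,m)) / (t − t^{−1}) if a(i,j) = −1. -/

import Mathlib

noncomputable section

/-- The base field `F = ℂ(s)`, rational functions over `ℂ` in one variable `s`. -/
abbrev F : Type := RatFunc ℂ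

/-- `t^{1/2} := s`. -/
def tHalf : F := RatFunc.X

/-- `t := s^2`. -/
def tq : F := RatFunc.X ^ 2

/-- `A = (a i j)` is the Cartan matrix of a finite-dimensional simply-laced simple Lie
algebra of type ADE: a symmetric positive-definite integer matrix with diagonal entries `2`
and off-diagonal entries in `{0, -1}`. -/
def IsCartanADE {I : Type} [Fintype I] (a : I → I → ℤ) : Prop :=
  (∀ i, a i i = 2) ∧ (∀ i j, a i j = a j i) ∧
    (∀ i j, i ≠ j → a i j = 0 ∨ a i j = -1) ∧
    Matrix.PosDef (Matrix.of fun i j : I => (a i j : ℝ))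

variable {I : Type} [Fintype I] [DecidableEq I]

/-- The generator `y(i,m)` of the free algebra. -/
def X (i : I) (m : ℤ) : FreeAlgebra F (I × ℤ) := FreeAlgebra.ι F (i, m)

/-- The defining relations (a), (b), (c) of the quantum Grothendieck ring `K_t(A)`:
(a) quantum Serre relations in each copy, (b) `t`-boson relations between adjacent
copies, (c) `t`-commutation relations between non-adjacent copies. -/
inductive KtRel (a : I → I → ℤ) :
    FreeAlgebra F (I × ℤ) → FreeAlgebra F (I × ℤ) → Prop
  | comm0 {i j : I} {m : ℤ} (h : a i j = 0) :
      KtRel a (X i m * X j m) (X j m * X i m)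
  | serre {i j : I} {m : ℤ} (h : a i j = -1) :
      KtRel a (X i m ^ 2 * X j m + X j m * X i m ^ 2)
        ((tq + tq⁻¹) • (X i m * X j m * X i m))
  | boson (i j : I) (m : ℤ) :
      KtRel a (X i m * X j (m + 1))
        ((tq ^ (a i j)) • (X j (m + 1) * X i m)
          + (if i = j then ((1 : F) - tq ^ 2) • (1 : FreeAlgebra F (I × ℤ)) else 0))
  | tcomm {i j : I} {m p : ℤ} (h : p > m + 1) :
      KtRel a (X i m * X j p)
        ((tq ^ ((((-1 : ℤˣ) ^ (p - m + 1) : ℤˣ) : ℤ) * a i j)) • (X j p * X i m))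

/-- The quantum Grothendieck ring `K_t(A)`. -/
abbrev Kt (a : I → I → ℤ) := RingQuot (KtRel a)

/-- The generators `y(i,m)` of `K_t(A)`. -/
def y (a : I → I → ℤ) (i : I) (m : ℤ) : Kt a :=
  RingQuot.mkAlgHom F (KtRel a) (X i m)

/-- `z(i; j, m) := (t^{1/2} y(j,m) y(i,m) − t^{−1/2} y(i,m) y(j,m)) / (t − t^{−1})`. -/
def z (a : I → I → ℤ) (i j : I) (m : ℤ) : Kt a :=
  (tq - tq⁻¹)⁻¹ • (tHalf • (y a j m * y a i m) - tHalf⁻¹ • (y a i m * y a j m))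

/-- `T` satisfies the defining formulas of the braid-group generator `T_i` on `K_t(A)`:
`T(y(j,m)) = y(j, m + δ_{ij})` if `a i j ≠ -1`, and
`T(y(j,m)) = (t^{1/2} y(j,m) y(i,m) − t^{−1/2} y(i,m) y(j,m)) / (t − t^{−1})`
if `a i j = -1`. -/
def TiFormula (a : I → I → ℤ) (i : I) (T : Kt a → Kt a) : Prop :=
  ∀ (j : I) (m : ℤ),
    T (y a j m) =
      if a i j = -1 then z a i j m else y a j (m + if i = j then 1 else 0)

/-- `T` satisfies the defining formulas of the inverse braid-group generator `T_i'`: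
`T(y(j,m)) = y(j, m − δ_{ij})` if `a i j ≠ -1`, and
`T(y(j,m)) = (t^{1/2} y(i,m) y(j,m) − t^{−1/2} y(j,m) y(i,m)) / (t − t^{−1})`
if `a i j = -1`. -/
def TiInvFormula (a : I → I → ℤ) (i : I) (T : Kt a → Kt a) : Prop :=
  ∀ (j : I) (m : ℤ),
    T (y a j m) =
      if a i j = -1 then
        (tq - tq⁻¹)⁻¹ • (tHalf • (y a i m * y a j m) - tHalf⁻¹ • (y a j m * y a i m))
      else y a j (m - if i = j then 1 else 0)

/-- The braid relations of the braid group `B(A)`: `σ_i σ_j σ_i = σ_j σ_i σ_j` whenever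
`a i j = -1`, and `σ_i σ_j = σ_j σ_i` whenever `a i j = 0` with `i ≠ j`. -/
def braidRels {I : Type} (a : I → I → ℤ) : Set (FreeGroup I) :=
  {r | (∃ i j : I, a i j = -1 ∧
          r = FreeGroup.of i * FreeGroup.of j * FreeGroup.of i *
              (FreeGroup.of j * FreeGroup.of i * FreeGroup.of j)⁻¹) ∨
       (∃ i j : I, i ≠ j ∧ a i j = 0 ∧
          r = FreeGroup.of i * FreeGroup.of j * (FreeGroup.of j * FreeGroup.of i)⁻¹)}


/-! ### Auxiliary lemmas -/

lemma tHalf_ne : (tHalf : F) ≠ 0 := RatFunc.X_ne_zero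

lemma tq_eq : (tq : F) = tHalf * tHalf := by rw [tq, tHalf, pow_two]

lemma tq_ne : (tq : F) ≠ 0 := by rw [tq_eq]; exact mul_ne_zero tHalf_ne tHalf_ne

lemma td_ne : (tq : F) - tq⁻¹ ≠ 0 := by
  intro h
  apply sub_eq_zero.mp at h
  have h4 : (RatFunc.X : F) ^ 4 = 1 := by
    have hX : (RatFunc.X : F) ≠ 0 := RatFunc.X_ne_zero
    rw [tq] at h
    field_simp at h
    linear_combination h
  have h5 := RatFunc.algebraMap_injective ℂ
    (by simpa [map_pow, RatFunc.algebraMap_X] using h4 :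
      algebraMap (Polynomial ℂ) F (Polynomial.X ^ 4) = algebraMap _ _ 1)
  have h6 := congrArg Polynomial.natDegree h5
  simp [Polynomial.natDegree_X_pow] at h6

section KtLemmas
variable {a : I → I → ℤ}

lemma relComm0 {i j : I} (h : a i j = 0) (m : ℤ) :
    y a i m * y a j m = y a j m * y a i m := by
  have hr := RingQuot.mkAlgHom_rel F (KtRel.comm0 (a := a) (m := m) h)
  simpa [y, map_mul] using hr

lemma relBosonSelf {i : I} (h2 : a i i = 2) (m : ℤ) :
    y a i m * y a i (m + 1) =
      (tq * tq) • (y a i (m + 1) * y a i m) + (1 - tq * tq) • (1 : Kt a) := by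
  have hr := RingQuot.mkAlgHom_rel F (KtRel.boson (a := a) i i m)
  rw [h2] at hr
  simp only [if_pos rfl, map_add, map_mul, map_smul, map_one] at hr
  rw [y, y]
  rw [hr]
  norm_num
  rw [pow_two]

lemma relBosonAdj {i j : I} (h : a i j = -1) (hne : i ≠ j) (m : ℤ) :
    y a i m * y a j (m + 1) = tq⁻¹ • (y a j (m + 1) * y a i m) := by
  have hr := RingQuot.mkAlgHom_rel F (KtRel.boson (a := a) i j m)
  rw [h] at hr
  simp only [if_neg hne, add_zero, map_mul, map_smul, zpow_neg, zpow_one] at hr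
  rw [y, y]
  rw [hr]

end KtLemmas

section CalcLemmas
variable {K : Type} [Field K] {R : Type} [Ring R] [Algebra K R]

lemma calcOne (t th : K) (ht : t = th * th) (hth : th ≠ 0) (hd : t - t⁻¹ ≠ 0)
    (X Y Z : R)
    (hZX : Z * X = (t * t) • (X * Z) + (1 - t * t) • (1 : R))
    (hYX : Y * X = t⁻¹ • (X * Y)) :
    (t - t⁻¹)⁻¹ • (th • (X * ((t - t⁻¹)⁻¹ • (th • (Y * Z) - th⁻¹ • (Z * Y)))) -
      th⁻¹ • (((t - t⁻¹)⁻¹ • (th • (Y * Z) - th⁻¹ • (Z * Y))) * X)) = Y := by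
  subst ht
  have ht0 : th * th ≠ 0 := mul_ne_zero hth hth
  have hd2 : th * th * (th * th) - 1 ≠ 0 := by
    have e : th * th * (th * th) - 1 = (th * th - (th * th)⁻¹) * (th * th) := by
      field_simp
    rw [e]
    exact mul_ne_zero hd ht0
  have e : (th * th - (th * th)⁻¹)⁻¹ = th * th * (th * th * (th * th) - 1)⁻¹ := by
    rw [show th * th - (th * th)⁻¹ = (th * th * (th * th) - 1) * (th * th)⁻¹ by field_simp,
      mul_inv, inv_inv, mul_comm]
  have h1 : Y * Z * X = (th * th) • (X * (Y * Z)) + (1 - th * th * (th * th)) • Y := by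
    rw [mul_assoc, hZX, mul_add, mul_smul_comm, mul_smul_comm, mul_one,
      ← mul_assoc Y X Z, hYX, smul_mul_assoc, smul_smul, mul_assoc X Y Z,
      show th * th * (th * th) * (th * th)⁻¹ = th * th by field_simp]
  have h2 : Z * Y * X = (th * th) • (X * (Z * Y)) + ((th * th)⁻¹ - th * th) • Y := by
    rw [mul_assoc, hYX, mul_smul_comm, ← mul_assoc Z X Y, hZX, add_mul, smul_mul_assoc,
      smul_mul_assoc, one_mul, smul_add, smul_smul, smul_smul, mul_assoc X Z Y,
      show (th * th)⁻¹ * (th * th * (th * th)) = th * th by field_simp,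
      show (th * th)⁻¹ * (1 - th * th * (th * th)) = (th * th)⁻¹ - th * th by field_simp]
  simp only [smul_sub, smul_smul, mul_smul_comm, smul_mul_assoc, mul_sub, sub_mul]
  rw [h1, h2]
  simp only [smul_add, smul_smul, smul_sub]
  match_scalars
  · field_simp
    ring
  · field_simp
    ring
  · rw [e]
    field_simp [hd2]
    have h4 : th ^ 4 - 1 ≠ 0 := by rw [show th ^ 4 = th * th * (th * th) by ring]; exact hd2
    rw [← neg_div, div_eq_one_iff_eq h4]
    ring

lemma calcComm3 (c th ti : K) (A B C : R) (hBC : B * C = C * B) :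
    c • (th • ((c • (th • (C * A) - ti • (A * C))) * B) -
        ti • (B * (c • (th • (C * A) - ti • (A * C))))) =
    c • (th • (C * (c • (th • (A * B) - ti • (B * A)))) -
        ti • ((c • (th • (A * B) - ti • (B * A))) * C)) := by
  have w1 : (C * A) * B = C * (A * B) := mul_assoc ..
  have w2 : (A * C) * B = (A * B) * C := by rw [mul_assoc, ← hBC, ← mul_assoc]
  have w3 : B * (C * A) = C * (B * A) := by rw [← mul_assoc, hBC, mul_assoc]
  have w4 : B * (A * C) = (B * A) * C := (mul_assoc ..).symm
  simp only [smul_sub, smul_smul, mul_smul_comm, smul_mul_assoc, mul_sub, sub_mul]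
  rw [w1, w2, w3, w4]
  module

lemma calcComm4 (c th ti : K) (A B C : R) (hAC : A * C = C * A) :
    c • (th • (C * (c • (th • (B * A) - ti • (A * B)))) -
        ti • ((c • (th • (B * A) - ti • (A * B))) * C)) =
    c • (th • ((c • (th • (C * B) - ti • (B * C))) * A) -
        ti • (A * (c • (th • (C * B) - ti • (B * C))))) := by
  have w1 : C * (B * A) = (C * B) * A := (mul_assoc ..).symm
  have w2 : C * (A * B) = A * (C * B) := by rw [← mul_assoc, ← hAC, mul_assoc]
  have w3 : (B * A) * C = (B * C) * A := by rw [mul_assoc, hAC, ← mul_assoc]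
  have w4 : (A * B) * C = A * (B * C) := mul_assoc ..
  simp only [smul_sub, smul_smul, mul_smul_comm, smul_mul_assoc, mul_sub, sub_mul]
  rw [w1, w2, w3, w4]
  module

lemma calcComm5 (c th ti : K) (A B C : R) (hAB : A * B = B * A) :
    c • (th • ((c • (th • (C * A) - ti • (A * C))) * B) -
        ti • (B * (c • (th • (C * A) - ti • (A * C))))) =
    c • (th • ((c • (th • (C * B) - ti • (B * C))) * A) -
        ti • (A * (c • (th • (C * B) - ti • (B * C))))) := by
  have w1 : (C * A) * B = (C * B) * A := by rw [mul_assoc, hAB, ← mul_assoc]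
  have w2 : (A * C) * B = A * (C * B) := mul_assoc ..
  have w3 : B * (C * A) = (B * C) * A := (mul_assoc ..).symm
  have w4 : B * (A * C) = A * (B * C) := by rw [← mul_assoc, ← hAB, mul_assoc]
  simp only [smul_sub, smul_smul, mul_smul_comm, smul_mul_assoc, mul_sub, sub_mul]
  rw [w1, w2, w3, w4]
  module

end CalcLemmas

section TLemmas
variable {a : I → I → ℤ} {T : I → (Kt a ≃ₐ[F] Kt a)} (hT : ∀ i, TiFormula a i ⇑(T i))
include hT

lemma T_self {i : I} (h2 : a i i = 2) (m : ℤ) : T i (y a i m) = y a i (m + 1) := by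
  have h := hT i i m
  rw [if_neg (by omega), if_pos rfl] at h
  exact h

lemma T_fix {i j : I} (h : a i j ≠ -1) (hne : i ≠ j) (m : ℤ) : T i (y a j m) = y a j m := by
  have h' := hT i j m
  rw [if_neg h, if_neg hne, add_zero] at h'
  exact h'

lemma T_adj {i j : I} (h : a i j = -1) (m : ℤ) : T i (y a j m) = z a i j m := by
  have h' := hT i j m
  rwa [if_pos h] at h'

lemma T_z {i j : I} (h2i : a i i = 2) (hij : a i j = -1) (hji : a j i = -1) (m : ℤ) :
    T i (z a j i m) = y a j m := by
  have hne : j ≠ i := by intro e; rw [e, h2i] at hij; omega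
  have e1 : T i (z a j i m) = (tq - tq⁻¹)⁻¹ •
      (tHalf • (y a i (m + 1) * z a i j m) - tHalf⁻¹ • (z a i j m * y a i (m + 1))) := by
    rw [z]
    simp only [map_smul, map_sub, map_mul, T_self hT h2i, T_adj hT hij]
  rw [e1, z]
  exact calcOne tq tHalf tq_eq tHalf_ne td_ne _ _ _ (relBosonSelf h2i m) (relBosonAdj hji hne m)

end TLemmas

lemma no_triangle {a : I → I → ℤ} (hA : IsCartanADE a) {i j k : I}
    (hij : a i j = -1) (hik : a i k = -1) (hjk : a j k = -1) : False := by
  obtain ⟨hdiag, hsymm, _, hpos⟩ := hA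
  have hij_ne : i ≠ j := by intro e; rw [e, hdiag] at hij; omega
  have hik_ne : i ≠ k := by intro e; rw [e, hdiag] at hik; omega
  have hjk_ne : j ≠ k := by intro e; rw [e, hdiag] at hjk; omega
  set M : Matrix I I ℝ := Matrix.of fun p q : I => ((a p q : ℝ)) with hM
  set v : I → ℝ := fun p =>
    (if p = i then 1 else 0) + (if p = j then 1 else 0) + (if p = k then 1 else 0) with hv
  have hv0 : v ≠ 0 := by
    intro h
    have := congrFun h i
    simp [hv, hij_ne, hik_ne] at this
  have hMv : ∀ p, (M.mulVec v) p = ((a p i : ℝ)) + (a p j : ℝ) + (a p k : ℝ) := by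
    intro p
    simp only [Matrix.mulVec, dotProduct, hv, hM, Matrix.of_apply, mul_add,
      Finset.sum_add_distrib, mul_ite, mul_one, mul_zero]
    rw [Finset.sum_ite_eq' Finset.univ i, Finset.sum_ite_eq' Finset.univ j,
      Finset.sum_ite_eq' Finset.univ k]
    simp
  have hQ : dotProduct (star v) (M.mulVec v) = 0 := by
    have hsv : star v = v := by simp
    rw [hsv]
    simp only [dotProduct, hv, add_mul, ite_mul, one_mul, zero_mul,
      Finset.sum_add_distrib]
    rw [Finset.sum_ite_eq' Finset.univ i, Finset.sum_ite_eq' Finset.univ j,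
      Finset.sum_ite_eq' Finset.univ k]
    simp only [Finset.mem_univ, if_true]
    rw [hMv i, hMv j, hMv k]
    have hji : a j i = -1 := (hsymm j i).trans hij
    have hki : a k i = -1 := (hsymm k i).trans hik
    have hkj : a k j = -1 := (hsymm k j).trans hjk
    rw [hdiag i, hdiag j, hdiag k, hij, hik, hjk, hji, hki, hkj]
    norm_num
  have := hpos.dotProduct_mulVec_pos hv0
  rw [hQ] at this
  exact lt_irrefl 0 this

lemma z_def (a : I → I → ℤ) (i j : I) (m : ℤ) :
    z a i j m = (tq - tq⁻¹)⁻¹ •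
      (tHalf • (y a j m * y a i m) - tHalf⁻¹ • (y a i m * y a j m)) := rfl

section Main
variable {a : I → I → ℤ} {T : I → (Kt a ≃ₐ[F] Kt a)} (hT : ∀ i, TiFormula a i ⇑(T i))
include hT

lemma braid_y (hA : IsCartanADE a) {i j : I} (hij : a i j = -1) (k : I) (m : ℤ) :
    T i (T j (T i (y a k m))) = T j (T i (T j (y a k m))) := by
  have hdiag := hA.1
  have hsymm := hA.2.1
  have hoff := hA.2.2.1
  have hji : a j i = -1 := (hsymm j i).trans hij
  have hne : i ≠ j := by intro e; rw [e, hdiag] at hij; omega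
  by_cases hki : k = i
  · subst hki
    rw [T_self hT (hdiag k) m, T_adj hT hji (m + 1), T_z hT (hdiag k) hij hji (m + 1),
      T_adj hT hji m, T_z hT (hdiag k) hij hji m, T_self hT (hdiag j) m]
  by_cases hkj : k = j
  · subst hkj
    rw [T_adj hT hij m, T_z hT (hdiag k) hji hij m, T_self hT (hdiag i) m,
      T_self hT (hdiag k) m, T_adj hT hij (m + 1), T_z hT (hdiag k) hji hij (m + 1)]
  -- now k ∉ {i, j}
  have hik2 := hoff i k (fun e => hki e.symm)
  have hjk2 := hoff j k (fun e => hkj e.symm)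
  rcases hik2 with hik0 | hik1
  · rcases hjk2 with hjk0 | hjk1
    · -- a i k = 0, a j k = 0
      have fik : T i (y a k m) = y a k m := T_fix hT (by simp [hik0]) (fun e => hki e.symm) m
      have fjk : T j (y a k m) = y a k m := T_fix hT (by simp [hjk0]) (fun e => hkj e.symm) m
      rw [fik, fjk, fik, fjk]
    · -- a i k = 0, a j k = -1
      have fik : T i (y a k m) = y a k m := T_fix hT (by simp [hik0]) (fun e => hki e.symm) m
      have fjk : T j (y a k m) = z a j k m := T_adj hT hjk1 m
      have fij : T i (y a j m) = z a i j m := T_adj hT hij m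
      have fTzj : T j (z a i j m) = y a i m := T_z hT (hdiag j) hji hij m
      have comm : y a i m * y a k m = y a k m * y a i m := relComm0 hik0 m
      have step1 : T i (z a j k m) = (tq - tq⁻¹)⁻¹ •
          (tHalf • (y a k m * z a i j m) - tHalf⁻¹ • (z a i j m * y a k m)) := by
        rw [z_def a j k m, map_smul, map_sub, map_smul, map_smul, map_mul, map_mul, fik, fij]
      have step2 : T j ((tq - tq⁻¹)⁻¹ •
          (tHalf • (y a k m * z a i j m) - tHalf⁻¹ • (z a i j m * y a k m))) =
          (tq - tq⁻¹)⁻¹ •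
          (tHalf • (z a j k m * y a i m) - tHalf⁻¹ • (y a i m * z a j k m)) := by
        rw [map_smul, map_sub, map_smul, map_smul, map_mul, map_mul, fjk, fTzj]
      rw [fik, fjk, step1, step2, z_def a i j m, z_def a j k m]
      exact calcComm4 _ tHalf tHalf⁻¹ (y a i m) (y a j m) (y a k m) comm
  · rcases hjk2 with hjk0 | hjk1
    · -- a i k = -1, a j k = 0
      have fik : T i (y a k m) = z a i k m := T_adj hT hik1 m
      have fjk : T j (y a k m) = y a k m := T_fix hT (by simp [hjk0]) (fun e => hkj e.symm) m
      have fji : T j (y a i m) = z a j i m := T_adj hT hji m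
      have fTz : T i (z a j i m) = y a j m := T_z hT (hdiag i) hij hji m
      have comm : y a j m * y a k m = y a k m * y a j m := relComm0 hjk0 m
      have step1 : T j (z a i k m) = (tq - tq⁻¹)⁻¹ •
          (tHalf • (y a k m * z a j i m) - tHalf⁻¹ • (z a j i m * y a k m)) := by
        rw [z_def a i k m, map_smul, map_sub, map_smul, map_smul, map_mul, map_mul, fjk, fji]
      have step2 : T i ((tq - tq⁻¹)⁻¹ •
          (tHalf • (y a k m * z a j i m) - tHalf⁻¹ • (z a j i m * y a k m))) =
          (tq - tq⁻¹)⁻¹ •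
          (tHalf • (z a i k m * y a j m) - tHalf⁻¹ • (y a j m * z a i k m)) := by
        rw [map_smul, map_sub, map_smul, map_smul, map_mul, map_mul, fik, fTz]
      rw [fik, step1, step2, fjk, fik, step1, z_def a i k m, z_def a j i m]
      exact calcComm3 _ tHalf tHalf⁻¹ (y a i m) (y a j m) (y a k m) comm
    · exact (no_triangle hA hij hik1 hjk1).elim

lemma comm_y (hA : IsCartanADE a) {i j : I} (hne : i ≠ j) (hij0 : a i j = 0) (k : I) (m : ℤ) :
    T i (T j (y a k m)) = T j (T i (y a k m)) := by
  have hdiag := hA.1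
  have hsymm := hA.2.1
  have hoff := hA.2.2.1
  have hji0 : a j i = 0 := (hsymm j i).trans hij0
  have fji0 : T j (y a i m) = y a i m := T_fix hT (by simp [hji0]) (Ne.symm hne) m
  have fij0 : T i (y a j m) = y a j m := T_fix hT (by simp [hij0]) hne m
  by_cases hki : k = i
  · subst hki
    rw [T_fix hT (by simp [hji0]) (Ne.symm hne) m, T_self hT (hdiag k) m,
      T_fix hT (by simp [hji0]) (Ne.symm hne) (m + 1)]
  by_cases hkj : k = j
  · subst hkj
    rw [T_fix hT (by simp [hij0]) hne m, T_self hT (hdiag k) m,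
      T_fix hT (by simp [hij0]) hne (m + 1)]
  have hik2 := hoff i k (fun e => hki e.symm)
  have hjk2 := hoff j k (fun e => hkj e.symm)
  rcases hik2 with hik0 | hik1
  · rcases hjk2 with hjk0 | hjk1
    · have fik : T i (y a k m) = y a k m := T_fix hT (by simp [hik0]) (fun e => hki e.symm) m
      have fjk : T j (y a k m) = y a k m := T_fix hT (by simp [hjk0]) (fun e => hkj e.symm) m
      rw [fjk, fik, fjk]
    · -- a i k = 0, a j k = -1
      have fik : T i (y a k m) = y a k m := T_fix hT (by simp [hik0]) (fun e => hki e.symm) m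
      have fjk : T j (y a k m) = z a j k m := T_adj hT hjk1 m
      have step : T i (z a j k m) = z a j k m := by
        rw [z_def a j k m, map_smul, map_sub, map_smul, map_smul, map_mul, map_mul, fik, fij0]
      rw [fjk, fik, fjk, step]
  · rcases hjk2 with hjk0 | hjk1
    · -- a i k = -1, a j k = 0
      have fik : T i (y a k m) = z a i k m := T_adj hT hik1 m
      have fjk : T j (y a k m) = y a k m := T_fix hT (by simp [hjk0]) (fun e => hkj e.symm) m
      have step : T j (z a i k m) = z a i k m := by
        rw [z_def a i k m, map_smul, map_sub, map_smul, map_smul, map_mul, map_mul, fjk, fji0]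
      rw [fjk, fik, step]
    · -- a i k = -1, a j k = -1
      have fik : T i (y a k m) = z a i k m := T_adj hT hik1 m
      have fjk : T j (y a k m) = z a j k m := T_adj hT hjk1 m
      have comm : y a i m * y a j m = y a j m * y a i m := relComm0 hij0 m
      have step1 : T i (z a j k m) = (tq - tq⁻¹)⁻¹ •
          (tHalf • (z a i k m * y a j m) - tHalf⁻¹ • (y a j m * z a i k m)) := by
        rw [z_def a j k m, map_smul, map_sub, map_smul, map_smul, map_mul, map_mul, fik, fij0]
      have step2 : T j (z a i k m) = (tq - tq⁻¹)⁻¹ •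
          (tHalf • (z a j k m * y a i m) - tHalf⁻¹ • (y a i m * z a j k m)) := by
        rw [z_def a i k m, map_smul, map_sub, map_smul, map_smul, map_mul, map_mul, fjk, fji0]
      rw [fjk, fik, step1, step2, z_def a i k m, z_def a j k m]
      exact calcComm5 _ tHalf tHalf⁻¹ (y a i m) (y a j m) (y a k m) comm

end Main

lemma aut_ext {a : I → I → ℤ} {e₁ e₂ : Kt a ≃ₐ[F] Kt a}
    (h : ∀ k m, e₁ (y a k m) = e₂ (y a k m)) : e₁ = e₂ := by
  apply AlgEquiv.ext
  intro x
  obtain ⟨w, rfl⟩ := RingQuot.mkAlgHom_surjective F (KtRel a) x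
  refine FreeAlgebra.induction F (I × ℤ)
    (motive := fun w => e₁ ((RingQuot.mkAlgHom F (KtRel a)) w) = e₂ ((RingQuot.mkAlgHom F (KtRel a)) w))
    ?_ ?_ ?_ ?_ w
  · intro r
    rw [AlgHom.commutes, AlgEquiv.commutes, AlgEquiv.commutes]
  · rintro ⟨k, m⟩
    exact h k m
  · intro u v hu hv
    rw [map_mul, map_mul, map_mul, hu, hv]
  · intro u v hu hv
    rw [map_add, map_add, map_add, hu, hv]

/-- the braid group `B(A)` acts on `K_t(A)` by `F`-algebra automorphisms,
sending the generator `σ_i` to `T_i`. -/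
theorem statement5 {I : Type} [Fintype I] [DecidableEq I] (a : I → I → ℤ)
    (hA : IsCartanADE a) (T : I → (Kt a ≃ₐ[F] Kt a))
    (hT : ∀ i, TiFormula a i ⇑(T i)) :
    ∃ Φ : PresentedGroup (braidRels a) →* (Kt a ≃ₐ[F] Kt a),
      ∀ i : I, Φ (PresentedGroup.of i) = T i := by
  have hrel : ∀ r ∈ braidRels a, (FreeGroup.lift T) r = 1 := by
    rintro r (⟨i, j, hij, rfl⟩ | ⟨i, j, hne, hij, rfl⟩)
    · simp only [map_mul, map_inv, FreeGroup.lift_apply_of]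
      rw [mul_inv_eq_one]
      apply aut_ext
      intro k m
      simp only [AlgEquiv.mul_apply]
      exact braid_y hT hA hij k m
    · simp only [map_mul, map_inv, FreeGroup.lift_apply_of]
      rw [mul_inv_eq_one]
      apply aut_ext
      intro k m
      simp only [AlgEquiv.mul_apply]
      exact comm_y hT hA hne hij k m
  exact ⟨PresentedGroup.toGroup hrel, fun i => PresentedGroup.toGroup.of hrel⟩
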